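/- arXiv:0902.0708 — 5 statements merged into one kernel-verified Lean document; each statement's English description precedes it below -/
import Mathlib

section
/- For all real numbers m, n with 0 ≤ m ≤ n and m + n > d/2, and any k ∈ ℝ^d, the convolution integral ∫_{ℝ^d} dh / ((1 + |k - h|²)^m (1 + |h|²)^n) is finite (convergent). -/
open MeasureTheory

/-- For `0 ≤ m ≤ n`, `m + n > d/2`, and any `k ∈ ℝ^d`, the convolution
integral `∫ dh / ((1+|k-h|²)^m (1+|h|²)^n)` converges. -/
theorem stmt0 (d : ℕ) (hd : 0 < d) (m n : ℝ) (hm : 0 ≤ m) (hmn : m ≤ n)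
    (hsum : (d : ℝ) / 2 < m + n) (k : EuclideanSpace ℝ (Fin d)) :
    Integrable (fun h : EuclideanSpace ℝ (Fin d) =>
      1 / ((1 + ‖k - h‖ ^ 2) ^ m * (1 + ‖h‖ ^ 2) ^ n)) := by
  have hn : 0 ≤ n := hm.trans hmn
  have hrank : (Module.finrank ℝ (EuclideanSpace ℝ (Fin d)) : ℝ) < 2 * (m + n) := by
    simp [finrank_euclideanSpace]
    linarith
  have hint := integrable_rpow_neg_one_add_norm_sq (E := EuclideanSpace ℝ (Fin d))
    (μ := volume) hrank
  set C : ℝ := 2 * (1 + ‖k‖ ^ 2) with hC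
  have hC1 : (1:ℝ) ≤ C := by nlinarith [sq_nonneg ‖k‖]
  refine (hint.const_mul (C ^ m)).mono' ?_ (Filter.Eventually.of_forall fun h => ?_)
  · apply Continuous.aestronglyMeasurable
    have h1 : Continuous fun h : EuclideanSpace ℝ (Fin d) =>
        ((1 : ℝ) + ‖k - h‖ ^ 2) ^ m :=
      (continuous_const.add ((continuous_const.sub continuous_id).norm.pow 2)).rpow_const
        fun x => Or.inr hm
    have h2 : Continuous fun h : EuclideanSpace ℝ (Fin d) =>
        ((1 : ℝ) + ‖h‖ ^ 2) ^ n :=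
      (continuous_const.add (continuous_norm.pow 2)).rpow_const fun x => Or.inr hn
    exact continuous_const.div (h1.mul h2) fun x => by positivity
  · set A : ℝ := 1 + ‖k - h‖ ^ 2 with hA
    set B : ℝ := 1 + ‖h‖ ^ 2 with hB
    have hA0 : (0:ℝ) < A := by positivity
    have hB0 : (0:ℝ) < B := by positivity
    -- Peetre: B ≤ C * A
    have hpeetre : B ≤ C * A := by
      have hnorm : ‖h‖ ≤ ‖k‖ + ‖k - h‖ := by
        calc ‖h‖ = ‖k - (k - h)‖ := by rw [show k - (k - h) = h from by abel]
          _ ≤ ‖k‖ + ‖k - h‖ := norm_sub_le _ _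
      have hsq : ‖h‖ ^ 2 ≤ (‖k‖ + ‖k - h‖) ^ 2 := by nlinarith [norm_nonneg h]
      rw [hA, hB, hC]
      nlinarith [sq_nonneg (‖k‖ - ‖k - h‖), sq_nonneg (‖k‖ * ‖k - h‖)]
    have hpow : B ^ m ≤ C ^ m * A ^ m := by
      rw [← Real.mul_rpow (by positivity) (by positivity)]
      exact Real.rpow_le_rpow (by positivity) hpeetre hm
    have hBn : (0:ℝ) < B ^ n := Real.rpow_pos_of_pos hB0 n
    have hgoal : 1 / (A ^ m * B ^ n) ≤ C ^ m * B ^ (-(2 * (m + n)) / 2) := by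
      have hexp : B ^ (-(2 * (m + n)) / 2) = (B ^ m * B ^ n)⁻¹ := by
        rw [show -(2 * (m + n)) / 2 = -(m + n) by ring, Real.rpow_neg hB0.le,
          Real.rpow_add hB0]
      rw [hexp, ← div_eq_mul_inv, div_le_div_iff₀ (by positivity) (by positivity)]
      calc 1 * (B ^ m * B ^ n) = B ^ m * B ^ n := one_mul _
        _ ≤ (C ^ m * A ^ m) * B ^ n := mul_le_mul_of_nonneg_right hpow hBn.le
        _ = C ^ m * (A ^ m * B ^ n) := by ring
    calc ‖1 / (A ^ m * B ^ n)‖ = 1 / (A ^ m * B ^ n) := by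
          rw [Real.norm_eq_abs, abs_of_pos]; positivity
      _ ≤ C ^ m * B ^ (-(2 * (m + n)) / 2) := hgoal
end

section
/- For real α > 0 and μ, ν ∈ ℝ, the ratio Γ(α + μ)/Γ(α + ν) equals α^{μ - ν} (1 + O(1/α)) as α → +∞; i.e., there exist constants C, A > 0 such that |Γ(α + μ)/Γ(α + ν) · α^{ν - μ} − 1| ≤ C/α for all α ≥ A. -/
open Real

/-- Gautschi-type bounds from log-convexity, for `u ∈ (0,1)`. -/
lemma gautschi_bounds {x u : ℝ} (hx : 0 < x) (hu0 : 0 < u) (hu1 : u < 1) :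
    1 - u / x ≤ Real.Gamma (x + u) / (Real.Gamma x * x ^ u) ∧
      Real.Gamma (x + u) / (Real.Gamma x * x ^ u) ≤ 1 := by
  have hGx : 0 < Real.Gamma x := Real.Gamma_pos_of_pos hx
  have hxu : 0 < x + u := by linarith
  have hGxu : 0 < Real.Gamma (x + u) := Real.Gamma_pos_of_pos hxu
  have hxpow : (0:ℝ) < x ^ u := Real.rpow_pos_of_pos hx u
  constructor
  · -- lower bound
    have key : Real.Gamma (x + 1) ≤ Real.Gamma (x + u) * (x + u) ^ (1 - u) := by
      have h := Real.Gamma_mul_add_mul_le_rpow_Gamma_mul_rpow_Gamma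
        (s := x + u) (t := x + u + 1) (a := u) (b := 1 - u)
        hxu (by linarith) hu0 (by linarith) (by ring)
      have e1 : u * (x + u) + (1 - u) * (x + u + 1) = x + 1 := by ring
      rw [e1] at h
      rw [Real.Gamma_add_one hxu.ne'] at h
      calc Real.Gamma (x + 1) ≤ Real.Gamma (x+u) ^ u * ((x+u) * Real.Gamma (x+u)) ^ (1-u) := h
        _ = Real.Gamma (x + u) * (x + u) ^ (1 - u) := by
            rw [Real.mul_rpow hxu.le hGxu.le]
            rw [mul_comm ((x+u) ^ (1-u)) (Real.Gamma (x+u) ^ (1-u)), ← mul_assoc,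
              ← Real.rpow_add hGxu]
            norm_num
    rw [Real.Gamma_add_one hx.ne'] at key
    have hpow : (0:ℝ) < (x + u) ^ (1 - u) := Real.rpow_pos_of_pos hxu _
    -- Γ(x+u)/(Γx x^u) ≥ x / ((x+u)^{1-u} x^u) = (x/(x+u))^{1-u}
    have step1 : x / ((x + u) ^ (1 - u) * x ^ u) ≤ Real.Gamma (x + u) / (Real.Gamma x * x ^ u) := by
      rw [div_le_div_iff₀ (by positivity) (by positivity)]
      calc x * (Real.Gamma x * x ^ u) = (x * Real.Gamma x) * x ^ u := by ring
        _ ≤ (Real.Gamma (x+u) * (x+u) ^ (1-u)) * x ^ u := by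
            exact mul_le_mul_of_nonneg_right key hxpow.le
        _ = Real.Gamma (x + u) * ((x + u) ^ (1 - u) * x ^ u) := by ring
    have e2 : x / ((x + u) ^ (1 - u) * x ^ u) = (x / (x + u)) ^ (1 - u) := by
      rw [Real.div_rpow hx.le hxu.le, div_eq_div_iff (by positivity) (by positivity),
        mul_comm ((x+u)^(1-u)) (x^u), ← mul_assoc, ← Real.rpow_add hx]
      norm_num
    have step2 : (1:ℝ) - u / x ≤ (x / (x + u)) ^ (1 - u) := by
      have hb1 : x / (x + u) ≤ 1 := by
        rw [div_le_one hxu]; linarith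
      have hb0 : 0 < x / (x + u) := by positivity
      have h3 : (x / (x+u)) ^ ((1:ℝ)) ≤ (x / (x + u)) ^ (1 - u) :=
        Real.rpow_le_rpow_of_exponent_ge hb0 hb1 (by linarith)
      rw [Real.rpow_one] at h3
      refine le_trans ?_ h3
      rw [le_div_iff₀ hxu]
      have e4 : (1 - u/x) * (x+u) = x - u^2/x := by field_simp; ring
      rw [e4]
      have : 0 ≤ u^2/x := by positivity
      linarith
    linarith [e2 ▸ step1]
  · -- upper bound
    have key : Real.Gamma (x + u) ≤ Real.Gamma x * x ^ u := by
      have h := Real.Gamma_mul_add_mul_le_rpow_Gamma_mul_rpow_Gamma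
        (s := x) (t := x + 1) (a := 1 - u) (b := u)
        hx (by linarith) (by linarith) hu0 (by ring)
      have e1 : (1 - u) * x + u * (x + 1) = x + u := by ring
      rw [e1, Real.Gamma_add_one hx.ne'] at h
      calc Real.Gamma (x + u) ≤ Real.Gamma x ^ (1-u) * (x * Real.Gamma x) ^ u := h
        _ = Real.Gamma x * x ^ u := by
            rw [Real.mul_rpow hx.le hGx.le, mul_comm (x ^ u), ← mul_assoc,
              ← Real.rpow_add hGx]
            norm_num
    rw [div_le_one (by positivity)]
    exact key

/-- The normalized ratio `Γ(x+t)/(Γ(x) x^t)` is `1 + O(1/x)` for every fixed `t`. -/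
lemma ratio_prop (t : ℝ) :
    ∃ C A : ℝ, 0 < C ∧ 1 ≤ A ∧ ∀ x : ℝ, A ≤ x →
      |Real.Gamma (x + t) / (Real.Gamma x * x ^ t) - 1| ≤ C / x := by
  -- step lemmas
  have step_up : ∀ s : ℝ, (∃ C A : ℝ, 0 < C ∧ 1 ≤ A ∧ ∀ x : ℝ, A ≤ x →
      |Real.Gamma (x + s) / (Real.Gamma x * x ^ s) - 1| ≤ C / x) →
      (∃ C A : ℝ, 0 < C ∧ 1 ≤ A ∧ ∀ x : ℝ, A ≤ x →
      |Real.Gamma (x + (s+1)) / (Real.Gamma x * x ^ (s+1)) - 1| ≤ C / x) := by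
    intro s ⟨C, A, hC, hA, h⟩
    refine ⟨2*C + |s|, max A (2*|s| + 1), by positivity, le_trans hA (le_max_left _ _), ?_⟩
    intro x hx
    have hxA : A ≤ x := le_trans (le_max_left _ _) hx
    have hxs : 2*|s| + 1 ≤ x := le_trans (le_max_right _ _) hx
    have hx0 : 0 < x := by have := abs_nonneg s; linarith
    have hxs0 : 0 < x + s := by have := neg_abs_le s; linarith
    have hGx : 0 < Real.Gamma x := Real.Gamma_pos_of_pos hx0
    have hne1 : Real.Gamma x ≠ 0 := hGx.ne'
    have hne2 : x ^ s ≠ 0 := (Real.rpow_pos_of_pos hx0 s).ne'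
    have hne3 : x ≠ 0 := hx0.ne'
    have hrec : Real.Gamma (x + (s+1)) / (Real.Gamma x * x ^ (s+1))
        = Real.Gamma (x + s) / (Real.Gamma x * x ^ s) * ((x+s)/x) := by
      have : x + (s + 1) = (x + s) + 1 := by ring
      rw [this, Real.Gamma_add_one hxs0.ne', Real.rpow_add_one hx0.ne']
      field_simp
    rw [hrec]
    have hb := h x hxA
    set r := Real.Gamma (x + s) / (Real.Gamma x * x ^ s) with hr
    have e : r * ((x+s)/x) - 1 = (r - 1) * ((x+s)/x) + s/x := by
      field_simp
      ring
    rw [e]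
    have hfrac : |(x+s)/x| ≤ 2 := by
      rw [abs_div, abs_of_pos hx0, div_le_iff₀ hx0]
      have h1 : |x + s| ≤ x + |s| := by
        calc |x + s| ≤ |x| + |s| := abs_add_le _ _
          _ = x + |s| := by rw [abs_of_pos hx0]
      linarith
    calc |(r - 1) * ((x+s)/x) + s/x| ≤ |(r-1) * ((x+s)/x)| + |s/x| := abs_add_le _ _
      _ = |r - 1| * |(x+s)/x| + |s|/x := by rw [abs_mul, abs_div s x, abs_of_pos hx0]
      _ ≤ (C/x) * 2 + |s|/x := by
          refine add_le_add ?_ le_rfl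
          exact mul_le_mul hb hfrac (abs_nonneg _) (by positivity)
      _ = (2*C + |s|)/x := by ring
  have step_down : ∀ s : ℝ, (∃ C A : ℝ, 0 < C ∧ 1 ≤ A ∧ ∀ x : ℝ, A ≤ x →
      |Real.Gamma (x + s) / (Real.Gamma x * x ^ s) - 1| ≤ C / x) →
      (∃ C A : ℝ, 0 < C ∧ 1 ≤ A ∧ ∀ x : ℝ, A ≤ x →
      |Real.Gamma (x + (s-1)) / (Real.Gamma x * x ^ (s-1)) - 1| ≤ C / x) := by
    intro s ⟨C, A, hC, hA, h⟩
    refine ⟨2*C + 2*|s-1|, max A (2*|s-1| + 2*|s| + 1), by positivity,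
      le_trans hA (le_max_left _ _), ?_⟩
    intro x hx
    have hxA : A ≤ x := le_trans (le_max_left _ _) hx
    have hxs : 2*|s-1| + 2*|s| + 1 ≤ x := le_trans (le_max_right _ _) hx
    have hx0 : 0 < x := by have := abs_nonneg (s-1); have := abs_nonneg s; linarith
    have hxs1 : 2*|s-1| ≤ x := by have := abs_nonneg s; linarith
    have hxs0 : 0 < x + (s - 1) := by have := neg_abs_le (s-1); linarith
    have hhalf : x / 2 ≤ x + (s-1) := by have := neg_abs_le (s-1); linarith
    have hGx : 0 < Real.Gamma x := Real.Gamma_pos_of_pos hx0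
    have hne1 : Real.Gamma x ≠ 0 := hGx.ne'
    have hne2 : x ^ (s-1) ≠ 0 := (Real.rpow_pos_of_pos hx0 (s-1)).ne'
    have hne3 : x ≠ 0 := hx0.ne'
    have hne4 : x + (s-1) ≠ 0 := hxs0.ne'
    have hrec : Real.Gamma (x + (s-1)) / (Real.Gamma x * x ^ (s-1))
        = Real.Gamma (x + s) / (Real.Gamma x * x ^ s) * (x/(x+(s-1))) := by
      have e1 : x + s = (x + (s-1)) + 1 := by ring
      have e2 : x ^ s = x ^ (s-1) * x := by
        rw [← Real.rpow_add_one hne3]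
        congr 1
        ring
      rw [e1, Real.Gamma_add_one hxs0.ne', e2]
      field_simp
    rw [hrec]
    have hb := h x hxA
    set r := Real.Gamma (x + s) / (Real.Gamma x * x ^ s) with hr
    have e : r * (x/(x+(s-1))) - 1 = (r - 1) * (x/(x+(s-1))) + (1-s)/(x+(s-1)) := by
      field_simp
      ring
    rw [e]
    have hfrac : |x/(x+(s-1))| ≤ 2 := by
      rw [abs_div, abs_of_pos hx0, abs_of_pos hxs0, div_le_iff₀ hxs0]
      linarith
    have hlast : |(1-s)/(x+(s-1))| ≤ 2*|s-1|/x := by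
      rw [abs_div, abs_of_pos hxs0]
      rw [div_le_div_iff₀ hxs0 hx0]
      have e3 : |1 - s| = |s - 1| := abs_sub_comm 1 s
      rw [e3]
      nlinarith [abs_nonneg (s-1)]
    calc |(r - 1) * (x/(x+(s-1))) + (1-s)/(x+(s-1))|
        ≤ |(r-1) * (x/(x+(s-1)))| + |(1-s)/(x+(s-1))| := abs_add_le _ _
      _ = |r - 1| * |x/(x+(s-1))| + |(1-s)/(x+(s-1))| := by rw [abs_mul]
      _ ≤ (C/x) * 2 + 2*|s-1|/x := by
          refine add_le_add ?_ hlast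
          exact mul_le_mul hb hfrac (abs_nonneg _) (by positivity)
      _ = (2*C + 2*|s-1|)/x := by ring
  -- base case for u ∈ [0,1)
  have base : ∀ u : ℝ, 0 ≤ u → u < 1 → ∃ C A : ℝ, 0 < C ∧ 1 ≤ A ∧ ∀ x : ℝ, A ≤ x →
      |Real.Gamma (x + u) / (Real.Gamma x * x ^ u) - 1| ≤ C / x := by
    intro u hu0 hu1
    refine ⟨1, 1, one_pos, le_rfl, ?_⟩
    intro x hx
    have hx0 : (0:ℝ) < x := lt_of_lt_of_le one_pos hx
    rcases eq_or_lt_of_le hu0 with h0 | h0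
    · -- u = 0
      rw [← h0]
      have hGx : 0 < Real.Gamma x := Real.Gamma_pos_of_pos hx0
      rw [Real.rpow_zero, add_zero, mul_one, div_self hGx.ne']
      simp
      positivity
    · obtain ⟨hlo, hhi⟩ := gautschi_bounds hx0 h0 hu1
      rw [abs_le]
      constructor
      · have : u / x ≤ 1 / x := by
          gcongr
        linarith
      · have : (0:ℝ) < 1 / x := one_div_pos.mpr hx0
        linarith
  -- combine: t = fract t + ⌊t⌋
  have key : ∀ n : ℤ, ∀ u : ℝ, 0 ≤ u → u < 1 → ∃ C A : ℝ, 0 < C ∧ 1 ≤ A ∧ ∀ x : ℝ, A ≤ x →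
      |Real.Gamma (x + (u + n)) / (Real.Gamma x * x ^ (u + (n:ℝ))) - 1| ≤ C / x := by
    intro n
    induction n using Int.induction_on with
    | zero => intro u hu0 hu1; simpa using base u hu0 hu1
    | succ k ih =>
        intro u hu0 hu1
        have := step_up (u + k) (ih u hu0 hu1)
        have e : u + ((k:ℤ)+1 : ℤ) = (u + (k:ℝ)) + 1 := by push_cast; ring
        rw [e]
        convert this using 4 <;> push_cast <;> ring
    | pred k ih =>
        intro u hu0 hu1
        have := step_down (u + (-k:ℤ)) (ih u hu0 hu1)
        have e : u + ((-(k:ℤ)-1 : ℤ):ℝ) = (u + ((-k:ℤ):ℝ)) - 1 := by push_cast; ring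
        rw [e]
        convert this using 4 <;> push_cast <;> ring
  have := key ⌊t⌋ (Int.fract t) (Int.fract_nonneg t) (Int.fract_lt_one t)
  have e : Int.fract t + (⌊t⌋:ℝ) = t := by rw [add_comm]; exact Int.floor_add_fract t
  rwa [e] at this

/-- `Γ(α+μ)/Γ(α+ν) = α^{μ-ν}(1 + O(1/α))` as `α → +∞`: there exist
constants `C, A > 0` with `|Γ(α+μ)/Γ(α+ν) · α^{ν-μ} − 1| ≤ C/α` for all `α ≥ A`. -/
theorem stmt2 (μ ν : ℝ) :
    ∃ C A : ℝ, 0 < C ∧ 0 < A ∧ ∀ α : ℝ, A ≤ α →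
      |Real.Gamma (α + μ) / Real.Gamma (α + ν) * α ^ (ν - μ) - 1| ≤ C / α := by
  obtain ⟨Cμ, Aμ, hCμ, hAμ, hμ⟩ := ratio_prop μ
  obtain ⟨Cν, Aν, hCν, hAν, hν⟩ := ratio_prop ν
  refine ⟨2*(Cμ + Cν), max Aμ (max Aν (2*Cν)), by positivity,
    lt_of_lt_of_le one_pos (le_trans hAμ (le_max_left _ _)), ?_⟩
  intro α hα
  have hαμ : Aμ ≤ α := le_trans (le_max_left _ _) hα
  have hαν : Aν ≤ α := le_trans (le_max_left _ _) (le_trans (le_max_right _ _) hα)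
  have hαC : 2*Cν ≤ α := le_trans (le_max_right _ _) (le_trans (le_max_right _ _) hα)
  have hα0 : 0 < α := lt_of_lt_of_le one_pos (le_trans hAμ hαμ)
  have hGα : 0 < Real.Gamma α := Real.Gamma_pos_of_pos hα0
  have hbμ := hμ α hαμ
  have hbν := hν α hαν
  set rμ := Real.Gamma (α + μ) / (Real.Gamma α * α ^ μ) with hrμ
  set rν := Real.Gamma (α + ν) / (Real.Gamma α * α ^ ν) with hrν
  have hCνα : Cν / α ≤ 1/2 := by
    rw [div_le_div_iff₀ hα0 two_pos]; linarith
  have hrνlo : 1/2 ≤ rν := by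
    have := abs_le.mp hbν
    linarith [this.1]
  have hrν0 : 0 < rν := by linarith
  have hGαν0 : 0 < Real.Gamma (α + ν) := by
    by_contra h
    push_neg at h
    have : rν ≤ 0 := div_nonpos_of_nonpos_of_nonneg h (by positivity)
    linarith
  have hpowμ : (0:ℝ) < α ^ μ := Real.rpow_pos_of_pos hα0 μ
  have hpowν : (0:ℝ) < α ^ ν := Real.rpow_pos_of_pos hα0 ν
  have emain : Real.Gamma (α + μ) / Real.Gamma (α + ν) * α ^ (ν - μ) = rμ / rν := by
    rw [Real.rpow_sub hα0, hrμ, hrν]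
    field_simp
  rw [emain]
  have e2 : rμ / rν - 1 = (rμ - rν) / rν := by
    field_simp
  rw [e2, abs_div, abs_of_pos hrν0]
  have hnum : |rμ - rν| ≤ (Cμ + Cν)/α := by
    calc |rμ - rν| = |(rμ - 1) + (1 - rν)| := by ring_nf
      _ ≤ |rμ - 1| + |1 - rν| := abs_add_le _ _
      _ = |rμ - 1| + |rν - 1| := by rw [abs_sub_comm 1 rν]
      _ ≤ Cμ/α + Cν/α := add_le_add hbμ hbν
      _ = (Cμ + Cν)/α := by rw [← add_div]
  calc |rμ - rν| / rν ≤ ((Cμ + Cν)/α) / (1/2) := by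
        apply div_le_div₀ (by positivity) hnum (by norm_num) hrνlo
    _ = 2*(Cμ + Cν)/α := by field_simp
end

section
/- Define L_δ(λ) := ∫_0^1 (1−t)^λ / (√t · (3+t)^{3λ+δ}) dt for δ ∈ ℝ and λ > 0. Then for each fixed δ, L_δ(λ) = 3^{−3λ−δ} √(π/(2λ)) (1 + O(1/λ)) as λ → +∞. -/
open MeasureTheory

/-- `L_δ(λ) := ∫_0^1 (1−t)^λ / (√t (3+t)^{3λ+δ}) dt`. -/
noncomputable def Lint (δ lam : ℝ) : ℝ :=
  ∫ t in Set.Ioo (0:ℝ) 1, (1 - t) ^ lam / (Real.sqrt t * (3 + t) ^ (3 * lam + δ))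

open Set Real

section Aux

lemma aux_integrable {s b : ℝ} (hs : -1 < s) (hb : 0 < b) :
    IntegrableOn (fun t : ℝ => t ^ s * Real.exp (-(b * t))) (Set.Ioi 0) := by
  have h := integrableOn_rpow_mul_exp_neg_mul_rpow hs (p := 1) one_pos hb
  refine h.congr_fun (fun x hx => ?_) measurableSet_Ioi
  simp only [Real.rpow_one, neg_mul]

lemma hasDeriv_phi {x : ℝ} (hx1 : x < 1) (hx0 : -3 < x) :
    HasDerivAt (fun t : ℝ => 3 * Real.log (1 + t/3) - Real.log (1 - t))
      (3 * ((1/3) / (1 + x/3)) - (-1) / (1 - x)) x := by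
  have h1 : HasDerivAt (fun t : ℝ => 1 + t/3) (1/3) x := by
    simpa using ((hasDerivAt_id x).div_const 3).const_add 1
  have h2 : HasDerivAt (fun t : ℝ => 1 - t) (-1) x := by
    simpa using (hasDerivAt_id x).const_sub 1
  have hA : (0:ℝ) < 1 + x/3 := by linarith
  have hB : (0:ℝ) < 1 - x := by linarith
  exact ((h1.log hA.ne').const_mul 3).sub (h2.log hB.ne')

lemma phi_ge {t : ℝ} (h0 : 0 ≤ t) (h1 : t < 1) :
    2 * t ≤ 3 * Real.log (1 + t/3) - Real.log (1 - t) := by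
  set F : ℝ → ℝ := fun t => 3 * Real.log (1 + t/3) - Real.log (1 - t) - 2 * t with hF
  have key : MonotoneOn F (Set.Icc 0 t) := by
    have hd : ∀ x ∈ Set.Icc (0:ℝ) t, HasDerivAt F
        (3 * ((1/3) / (1 + x/3)) - (-1) / (1 - x) - 2) x := by
      intro x hx
      have h2x : HasDerivAt (fun t : ℝ => 2 * t) 2 x := by
        simpa using (hasDerivAt_id x).const_mul 2
      exact (hasDeriv_phi (lt_of_le_of_lt hx.2 h1) (by linarith [hx.1])).sub h2x
    apply monotoneOn_of_deriv_nonneg (convex_Icc 0 t)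
    · exact continuousOn_of_forall_continuousAt (fun x hx => (hd x hx).continuousAt)
    · intro x hx
      rw [interior_Icc] at hx
      exact (hd x ⟨hx.1.le, hx.2.le⟩).differentiableAt.differentiableWithinAt
    · intro x hx
      rw [interior_Icc] at hx
      rw [(hd x ⟨hx.1.le, hx.2.le⟩).deriv]
      have hx1 : x < 1 := lt_of_lt_of_le hx.2 h1.le
      have hA : (0:ℝ) < 1 + x/3 := by linarith [hx.1]
      have hB : (0:ℝ) < 1 - x := by linarith
      have h : 3 * ((1:ℝ)/3/(1+x/3)) - -1/(1-x) - 2 = 1/(1+x/3) + 1/(1-x) - 2 := by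
        rw [← mul_div_assoc]
        norm_num
        ring
      rw [h, sub_nonneg, div_add_div _ _ hA.ne' hB.ne', le_div_iff₀ (mul_pos hA hB)]
      nlinarith [hx.1]
  have := key (Set.left_mem_Icc.2 h0) (Set.right_mem_Icc.2 h0) h0
  simp only [hF] at this
  norm_num at this
  linarith

lemma phi_le {t : ℝ} (h0 : 0 ≤ t) (h1 : t ≤ 1/2) :
    3 * Real.log (1 + t/3) - Real.log (1 - t) ≤ 2 * t + t^2 := by
  set F : ℝ → ℝ := fun t => 2 * t + t^2 - (3 * Real.log (1 + t/3) - Real.log (1 - t)) with hF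
  have key : MonotoneOn F (Set.Icc 0 t) := by
    have hd : ∀ x ∈ Set.Icc (0:ℝ) t, HasDerivAt F
        (2 + 2*x - (3 * ((1/3) / (1 + x/3)) - (-1) / (1 - x))) x := by
      intro x hx
      have hp : HasDerivAt (fun t : ℝ => 2 * t + t^2) (2 + 2*x) x := by
        have := ((hasDerivAt_id x).const_mul 2).add (hasDerivAt_pow 2 x)
        exact this.congr_deriv (by norm_num <;> ring)
      exact hp.sub (hasDeriv_phi (by linarith [hx.2]) (by linarith [hx.1]))
    apply monotoneOn_of_deriv_nonneg (convex_Icc 0 t)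
    · exact continuousOn_of_forall_continuousAt (fun x hx => (hd x hx).continuousAt)
    · intro x hx
      rw [interior_Icc] at hx
      exact (hd x ⟨hx.1.le, hx.2.le⟩).differentiableAt.differentiableWithinAt
    · intro x hx
      rw [interior_Icc] at hx
      rw [(hd x ⟨hx.1.le, hx.2.le⟩).deriv]
      have hx1 : x ≤ 1/2 := le_trans hx.2.le h1
      have hA : (0:ℝ) < 1 + x/3 := by linarith [hx.1]
      have hB : (0:ℝ) < 1 - x := by linarith
      have h : 2 + 2*x - (3 * ((1:ℝ)/3/(1+x/3)) - -1/(1-x))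
          = 2 + 2*x - (1/(1+x/3) + 1/(1-x)) := by
        rw [← mul_div_assoc]
        norm_num
        ring
      rw [h, sub_nonneg, div_add_div _ _ hA.ne' hB.ne', div_le_iff₀ (mul_pos hA hB)]
      nlinarith [hx.1, mul_nonneg hx.1.le (show (0:ℝ) ≤ 2 - 3*x - x^2 by nlinarith)]
  have := key (Set.left_mem_Icc.2 h0) (Set.right_mem_Icc.2 h0) h0
  simp only [hF] at this
  norm_num at this
  linarith

lemma exp_le_one_add {x x0 : ℝ} (hx : 0 ≤ x) (hx0 : x ≤ x0) :
    Real.exp x ≤ 1 + x * Real.exp x0 := by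
  have h1 : 1 - Real.exp (-x) ≤ x := by
    have := Real.add_one_le_exp (-x); linarith
  have h2 : Real.exp x - 1 ≤ Real.exp x * x := by
    have h3 := mul_le_mul_of_nonneg_left h1 (Real.exp_nonneg x)
    rw [mul_sub, ← Real.exp_add] at h3
    simp only [add_neg_cancel, Real.exp_zero, mul_one] at h3
    linarith
  have h3 : Real.exp x * x ≤ Real.exp x0 * x :=
    mul_le_mul_of_nonneg_right (Real.exp_le_exp.2 hx0) hx
  linarith

lemma lint_rw (δ lam : ℝ) :
    (3:ℝ) ^ (3 * lam + δ) * Lint δ lam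
      = ∫ t in Set.Ioo (0:ℝ) 1, t ^ (-(1/2) : ℝ)
          * Real.exp (lam * Real.log (1 - t) - (3*lam + δ) * Real.log (1 + t/3)) := by
  rw [Lint, ← integral_const_mul]
  refine setIntegral_congr_fun measurableSet_Ioo (fun t ht => ?_)
  obtain ⟨ht0, ht1⟩ := ht
  have h1t : (0:ℝ) < 1 - t := by linarith
  have h3t : (0:ℝ) < 3 + t := by linarith
  have hlog : Real.log (1 + t/3) = Real.log (3 + t) - Real.log 3 := by
    rw [show (1:ℝ) + t/3 = (3+t)/3 by ring, Real.log_div h3t.ne' (by norm_num)]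
  rw [Real.rpow_def_of_pos (by norm_num : (0:ℝ) < 3), Real.rpow_def_of_pos h1t,
    Real.rpow_def_of_pos h3t, Real.sqrt_eq_rpow, Real.rpow_neg ht0.le, hlog]
  rw [eq_comm, mul_comm ((t ^ ((1/2):ℝ))⁻¹) _, ← div_eq_mul_inv, mul_div_assoc']
  rw [div_eq_div_iff (by positivity) (by positivity)]
  rw [← Real.exp_add, mul_comm (t ^ ((1/2):ℝ)) (Real.exp _), ← mul_assoc, ← Real.exp_add]
  congr 1
  ring

end Aux

set_option maxHeartbeats 1000000 in
/-- for each fixed `δ`, `L_δ(λ) = 3^{−3λ−δ} √(π/(2λ)) (1 + O(1/λ))` as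
`λ → +∞`: there exist `C, Λ > 0` with `|3^{3λ+δ} √(2λ/π) L_δ(λ) − 1| ≤ C/λ` for `λ ≥ Λ`. -/
theorem stmt13 (δ : ℝ) :
    ∃ C Λ : ℝ, 0 < C ∧ 0 < Λ ∧ ∀ lam : ℝ, Λ ≤ lam →
      |3 ^ (3 * lam + δ) * Real.sqrt (2 * lam / Real.pi) * Lint δ lam - 1| ≤ C / lam := by
  set Cp : ℝ := |δ|/3 * Real.exp (|δ|/3) with hCp
  have hCp0 : 0 ≤ Cp := by positivity
  refine ⟨Cp + 1, 1, by positivity, one_pos, fun lam hlam => ?_⟩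
  have hlam0 : (0:ℝ) < lam := lt_of_lt_of_le one_pos hlam
  set b : ℝ := 2 * lam with hbdef
  have hb : 0 < b := by positivity
  set e : ℝ := 3 * lam + δ with he
  set F : ℝ → ℝ := fun t => t ^ (-(1/2) : ℝ)
      * Real.exp (lam * Real.log (1 - t) - e * Real.log (1 + t/3)) with hFdef
  set g0 : ℝ → ℝ := fun t => t ^ (-(1/2) : ℝ) * Real.exp (-(b * t)) with hg0def
  set g1 : ℝ → ℝ := fun t => t ^ ((1/2) : ℝ) * Real.exp (-(b * t)) with hg1def
  set g3 : ℝ → ℝ := fun t => t ^ ((3/2) : ℝ) * Real.exp (-(b * t)) with hg3def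
  -- integrability
  have hg0i : IntegrableOn g0 (Ioi 0) := aux_integrable (by norm_num) hb
  have hg1i : IntegrableOn g1 (Ioi 0) := aux_integrable (by norm_num) hb
  have hg3i : IntegrableOn g3 (Ioi 0) := aux_integrable (by norm_num) hb
  -- integral values
  have hI0 : ∫ t in Ioi (0:ℝ), g0 t = (1/b) ^ ((1/2):ℝ) * Real.sqrt π := by
    have h := Real.integral_rpow_mul_exp_neg_mul_Ioi (show (0:ℝ) < 1/2 by norm_num) hb
    rw [show ((1:ℝ)/2 - 1) = -(1/2) by norm_num, Real.Gamma_one_half_eq] at h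
    exact h
  have hG32 : Real.Gamma (3/2) = Real.sqrt π / 2 := by
    rw [show ((3:ℝ)/2) = 1/2 + 1 by norm_num, Real.Gamma_add_one (by norm_num),
      Real.Gamma_one_half_eq]
    ring
  have hG52 : Real.Gamma (5/2) = 3 * Real.sqrt π / 4 := by
    rw [show ((5:ℝ)/2) = 3/2 + 1 by norm_num, Real.Gamma_add_one (by norm_num), hG32]
    ring
  have hI1 : ∫ t in Ioi (0:ℝ), g1 t = (1/b) ^ ((3/2):ℝ) * (Real.sqrt π / 2) := by
    have h := Real.integral_rpow_mul_exp_neg_mul_Ioi (show (0:ℝ) < 3/2 by norm_num) hb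
    rw [show ((3:ℝ)/2 - 1) = 1/2 by norm_num, hG32] at h
    exact h
  have hI3 : ∫ t in Ioi (0:ℝ), g3 t = (1/b) ^ ((5/2):ℝ) * (3 * Real.sqrt π / 4) := by
    have h := Real.integral_rpow_mul_exp_neg_mul_Ioi (show (0:ℝ) < 5/2 by norm_num) hb
    rw [show ((5:ℝ)/2 - 1) = 3/2 by norm_num, hG52] at h
    exact h
  -- F is integrable on Ioo 0 1
  have hFmeas : AEStronglyMeasurable F (volume.restrict (Ioo (0:ℝ) 1)) := by
    apply Measurable.aestronglyMeasurable
    have m1 : Measurable fun t : ℝ => t ^ (-(1/2):ℝ) := by measurability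
    have m2 : Measurable fun t : ℝ => lam * Real.log (1-t) - e * Real.log (1+t/3) :=
      ((Real.measurable_log.comp (measurable_const.sub measurable_id)).const_mul lam).sub
        ((Real.measurable_log.comp (measurable_const.add (measurable_id.div_const 3))).const_mul e)
    exact m1.mul (Real.measurable_exp.comp m2)
  have hFnonneg : 0 ≤ᵐ[volume.restrict (Ioo (0:ℝ) 1)] F := by
    filter_upwards [ae_restrict_mem measurableSet_Ioo] with t ht
    have := Real.rpow_nonneg ht.1.le (-(1/2) : ℝ)
    positivity
  have hFint : IntegrableOn F (Ioo (0:ℝ) 1) := by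
    have hmaj : IntegrableOn (fun t : ℝ => Real.exp (|δ|/3) * t ^ (-(1/2) : ℝ)) (Ioo (0:ℝ) 1) := by
      apply Integrable.const_mul
      have h := (intervalIntegral.intervalIntegrable_rpow'
        (show (-1:ℝ) < -(1/2) by norm_num) (a := 0) (b := 1)).1
      exact h.mono_set Set.Ioo_subset_Ioc_self
    apply Integrable.mono' hmaj hFmeas
    filter_upwards [ae_restrict_mem measurableSet_Ioo] with t ht
    obtain ⟨ht0, ht1⟩ := ht
    have hrp : 0 ≤ t ^ (-(1/2) : ℝ) := Real.rpow_nonneg ht0.le _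
    rw [Real.norm_eq_abs, abs_of_nonneg (by positivity)]
    rw [mul_comm (Real.exp (|δ|/3))]
    apply mul_le_mul_of_nonneg_left _ hrp
    rw [Real.exp_le_exp]
    have hL0 : 0 ≤ Real.log (1 + t/3) := Real.log_nonneg (by linarith)
    have hL1 : Real.log (1 + t/3) ≤ t/3 := by
      have := Real.log_le_sub_one_of_pos (show (0:ℝ) < 1 + t/3 by linarith)
      linarith
    have hlog1t : Real.log (1 - t) ≤ 0 := Real.log_nonpos (by linarith) (by linarith)
    have h1 : lam * Real.log (1 - t) ≤ 0 := mul_nonpos_of_nonneg_of_nonpos hlam0.le hlog1t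
    have h2 : -(e * Real.log (1 + t/3)) ≤ |δ| * Real.log (1 + t/3) := by
      rw [he]
      nlinarith [mul_nonneg hlam0.le hL0, mul_le_mul_of_nonneg_right (neg_abs_le δ) hL0]
    have h3 : |δ| * Real.log (1 + t/3) ≤ |δ| * (t/3) :=
      mul_le_mul_of_nonneg_left hL1 (abs_nonneg δ)
    nlinarith [abs_nonneg δ]
  -- pointwise upper bound on Ioo 0 1
  have hptUp : ∀ t ∈ Ioo (0:ℝ) 1, F t ≤ g0 t + Cp * g1 t := by
    intro t ht
    obtain ⟨ht0, ht1⟩ := ht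
    have hrp : 0 ≤ t ^ (-(1/2) : ℝ) := Real.rpow_nonneg ht0.le _
    have hL0 : 0 ≤ Real.log (1 + t/3) := Real.log_nonneg (by linarith)
    have hL1 : Real.log (1 + t/3) ≤ t/3 := by
      have := Real.log_le_sub_one_of_pos (show (0:ℝ) < 1 + t/3 by linarith)
      linarith
    have hphi := phi_ge ht0.le ht1
    have hexp : Real.exp (lam * Real.log (1 - t) - e * Real.log (1 + t/3))
        ≤ Real.exp (-(b*t)) * (1 + Cp * t) := by
      have hstep : lam * Real.log (1 - t) - e * Real.log (1 + t/3)
          ≤ -(b*t) + |δ| * (t/3) := by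
        have hmul : lam * (2*t) ≤ lam * (3 * Real.log (1 + t/3) - Real.log (1 - t)) :=
          mul_le_mul_of_nonneg_left hphi hlam0.le
        have h2 : -(δ * Real.log (1 + t/3)) ≤ |δ| * Real.log (1 + t/3) := by
          nlinarith [neg_abs_le δ]
        have h3 : |δ| * Real.log (1 + t/3) ≤ |δ| * (t/3) :=
          mul_le_mul_of_nonneg_left hL1 (abs_nonneg δ)
        rw [he, hbdef]
        nlinarith
      calc Real.exp (lam * Real.log (1 - t) - e * Real.log (1 + t/3))
          ≤ Real.exp (-(b*t) + |δ| * (t/3)) := Real.exp_le_exp.2 hstep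
        _ = Real.exp (-(b*t)) * Real.exp (|δ| * (t/3)) := Real.exp_add _ _
        _ ≤ Real.exp (-(b*t)) * (1 + Cp * t) := by
            apply mul_le_mul_of_nonneg_left _ (Real.exp_nonneg _)
            have := exp_le_one_add (x := |δ| * (t/3)) (x0 := |δ|/3)
              (by positivity) (by nlinarith [abs_nonneg δ])
            calc Real.exp (|δ| * (t/3)) ≤ 1 + |δ| * (t/3) * Real.exp (|δ|/3) := this
              _ = 1 + Cp * t := by rw [hCp]; ring
    have key : F t ≤ t ^ (-(1/2) : ℝ) * (Real.exp (-(b*t)) * (1 + Cp * t)) :=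
      mul_le_mul_of_nonneg_left hexp hrp
    have hhalf : t ^ ((1/2):ℝ) = t ^ (-(1/2):ℝ) * t := by
      rw [← Real.rpow_add_one ht0.ne' (-(1/2))]
      norm_num
    calc F t ≤ t ^ (-(1/2) : ℝ) * (Real.exp (-(b*t)) * (1 + Cp * t)) := key
      _ = g0 t + Cp * g1 t := by rw [hg0def, hg1def]; simp only []; rw [hhalf]; ring
  -- upper bound
  have hUp : (∫ t in Ioo (0:ℝ) 1, F t) ≤ (∫ t in Ioi (0:ℝ), g0 t) + Cp * ∫ t in Ioi (0:ℝ), g1 t := by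
    have h1 : (∫ t in Ioo (0:ℝ) 1, F t) ≤ ∫ t in Ioo (0:ℝ) 1, (g0 t + Cp * g1 t) := by
      apply setIntegral_mono_on hFint _ measurableSet_Ioo hptUp
      exact ((hg0i.mono_set Set.Ioo_subset_Ioi_self).add
        ((hg1i.mono_set Set.Ioo_subset_Ioi_self).const_mul Cp))
    have h2 : (∫ t in Ioo (0:ℝ) 1, (g0 t + Cp * g1 t)) ≤ ∫ t in Ioi (0:ℝ), (g0 t + Cp * g1 t) := by
      apply setIntegral_mono_set (hg0i.add (hg1i.const_mul Cp))
      · filter_upwards [ae_restrict_mem measurableSet_Ioi] with t ht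
        have h0 : 0 ≤ t ^ (-(1/2) : ℝ) := Real.rpow_nonneg (le_of_lt ht) _
        have h1 : 0 ≤ t ^ ((1/2) : ℝ) := Real.rpow_nonneg (le_of_lt ht) _
        simp only [hg0def, hg1def, Pi.zero_apply]
        exact add_nonneg (mul_nonneg h0 (Real.exp_nonneg _))
          (mul_nonneg hCp0 (mul_nonneg h1 (Real.exp_nonneg _)))
      · exact HasSubset.Subset.eventuallyLE (fun x hx => hx.1)
    rw [integral_add hg0i (hg1i.const_mul Cp), integral_const_mul] at h2
    linarith
  -- pointwise lower bound on Ioo 0 (1/2)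
  have hptLow : ∀ t ∈ Ioo (0:ℝ) (1/2), g0 t - (Cp * g1 t + lam * g3 t) ≤ F t := by
    intro t ht
    obtain ⟨ht0, ht2⟩ := ht
    have ht1 : t < 1 := by linarith
    have hrp : 0 ≤ t ^ (-(1/2) : ℝ) := Real.rpow_nonneg ht0.le _
    have hL0 : 0 ≤ Real.log (1 + t/3) := Real.log_nonneg (by linarith)
    have hphi := phi_le ht0.le ht2.le
    have hexp : Real.exp (-(b*t)) * (1 - Cp * t - lam * t^2)
        ≤ Real.exp (lam * Real.log (1 - t) - e * Real.log (1 + t/3)) := by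
      have hstep : -(b*t) - (lam * t^2 + |δ| * (t/3))
          ≤ lam * Real.log (1 - t) - e * Real.log (1 + t/3) := by
        have hmul : lam * (3 * Real.log (1 + t/3) - Real.log (1 - t)) ≤ lam * (2*t + t^2) :=
          mul_le_mul_of_nonneg_left hphi hlam0.le
        have hL1 : Real.log (1 + t/3) ≤ t/3 := by
          have := Real.log_le_sub_one_of_pos (show (0:ℝ) < 1 + t/3 by linarith)
          linarith
        have h2 : δ * Real.log (1 + t/3) ≤ |δ| * Real.log (1 + t/3) :=
          mul_le_mul_of_nonneg_right (le_abs_self δ) hL0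
        have h3 : |δ| * Real.log (1 + t/3) ≤ |δ| * (t/3) :=
          mul_le_mul_of_nonneg_left hL1 (abs_nonneg δ)
        rw [he, hbdef]
        nlinarith
      calc Real.exp (-(b*t)) * (1 - Cp * t - lam * t^2)
          ≤ Real.exp (-(b*t)) * (1 - (lam * t^2 + |δ| * (t/3))) := by
            apply mul_le_mul_of_nonneg_left _ (Real.exp_nonneg _)
            have hCge : |δ|/3 ≤ Cp := by
              rw [hCp]
              nlinarith [Real.one_le_exp (show (0:ℝ) ≤ |δ|/3 by positivity), abs_nonneg δ]
            nlinarith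
        _ ≤ Real.exp (-(b*t)) * Real.exp (-(lam * t^2 + |δ| * (t/3))) := by
            apply mul_le_mul_of_nonneg_left _ (Real.exp_nonneg _)
            have := Real.add_one_le_exp (-(lam * t^2 + |δ| * (t/3)))
            linarith
        _ = Real.exp (-(b*t) - (lam * t^2 + |δ| * (t/3))) := by
            rw [← Real.exp_add]
            exact congrArg Real.exp (by ring)
        _ ≤ Real.exp (lam * Real.log (1 - t) - e * Real.log (1 + t/3)) :=
            Real.exp_le_exp.2 hstep
    have key : t ^ (-(1/2) : ℝ) * (Real.exp (-(b*t)) * (1 - Cp * t - lam * t^2)) ≤ F t :=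
      mul_le_mul_of_nonneg_left hexp hrp
    have hhalf : t ^ ((1/2):ℝ) = t ^ (-(1/2):ℝ) * t := by
      rw [← Real.rpow_add_one ht0.ne' (-(1/2))]
      norm_num
    have h32 : t ^ ((3/2):ℝ) = t ^ (-(1/2):ℝ) * t^2 := by
      rw [show (t:ℝ)^2 = t^((2:ℕ):ℝ) by rw [Real.rpow_natCast],
        ← Real.rpow_add ht0]
      norm_num
    calc g0 t - (Cp * g1 t + lam * g3 t)
        = t ^ (-(1/2) : ℝ) * (Real.exp (-(b*t)) * (1 - Cp * t - lam * t^2)) := by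
          rw [hg0def, hg1def, hg3def]; simp only []; rw [hhalf, h32]; ring
      _ ≤ F t := key
  -- tail bound
  have hTail : (∫ t in Ici (1/2:ℝ), g0 t) ≤ 2 * ∫ t in Ioi (0:ℝ), g1 t := by
    have hsub : Ici (1/2:ℝ) ⊆ Ioi 0 := fun x hx => lt_of_lt_of_le (by norm_num : (0:ℝ) < 1/2) hx
    have h1 : (∫ t in Ici (1/2:ℝ), g0 t) ≤ ∫ t in Ici (1/2:ℝ), 2 * g1 t := by
      apply setIntegral_mono_on (hg0i.mono_set hsub)
        ((hg1i.mono_set hsub).const_mul 2) measurableSet_Ici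
      intro t ht
      have ht0 : (0:ℝ) < t := lt_of_lt_of_le (by norm_num) ht
      have ht2 : (1:ℝ)/2 ≤ t := ht
      simp only [hg0def, hg1def]
      have hkey : t ^ (-(1/2) : ℝ) ≤ 2 * t ^ ((1/2):ℝ) := by
        have hrw : t ^ (-(1/2) : ℝ) = t ^ ((1/2):ℝ) / t := by
          rw [show (-(1/2):ℝ) = 1/2 - 1 by norm_num, Real.rpow_sub ht0, Real.rpow_one]
        rw [hrw, div_le_iff₀ ht0]
        nlinarith [Real.rpow_nonneg ht0.le ((1/2):ℝ)]
      calc t ^ (-(1/2) : ℝ) * Real.exp (-(b*t)) ≤ (2 * t ^ ((1/2):ℝ)) * Real.exp (-(b*t)) :=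
            mul_le_mul_of_nonneg_right hkey (Real.exp_nonneg _)
        _ = 2 * (t ^ ((1/2):ℝ) * Real.exp (-(b*t))) := by ring
    have h2 : (∫ t in Ici (1/2:ℝ), 2 * g1 t) ≤ ∫ t in Ioi (0:ℝ), 2 * g1 t := by
      apply setIntegral_mono_set (hg1i.const_mul 2)
      · filter_upwards [ae_restrict_mem measurableSet_Ioi] with t ht
        have h1 : 0 ≤ t ^ ((1/2) : ℝ) := Real.rpow_nonneg (le_of_lt ht) _
        simp only [hg1def, Pi.zero_apply]
        exact mul_nonneg (by norm_num) (mul_nonneg h1 (Real.exp_nonneg _))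
      · exact HasSubset.Subset.eventuallyLE hsub
    rw [integral_const_mul, integral_const_mul] at h2
    calc (∫ t in Ici (1/2:ℝ), g0 t) ≤ ∫ t in Ici (1/2:ℝ), 2 * g1 t := h1
      _ = 2 * ∫ t in Ici (1/2:ℝ), g1 t := integral_const_mul 2 _
      _ ≤ 2 * ∫ t in Ioi (0:ℝ), g1 t := h2
  -- lower bound
  have hLow : (∫ t in Ioi (0:ℝ), g0 t) - (2 * (∫ t in Ioi (0:ℝ), g1 t)
      + (Cp * (∫ t in Ioi (0:ℝ), g1 t) + lam * ∫ t in Ioi (0:ℝ), g3 t))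
      ≤ ∫ t in Ioo (0:ℝ) 1, F t := by
    have hsubIoi : Ioo (0:ℝ) (1/2) ⊆ Ioi 0 := fun x hx => hx.1
    have hsub1 : Ioo (0:ℝ) (1/2) ⊆ Ioo 0 1 := Set.Ioo_subset_Ioo_right (by norm_num)
    have hg0i' : IntegrableOn g0 (Ioo (0:ℝ) (1/2)) := hg0i.mono_set hsubIoi
    have hcomb : IntegrableOn (fun t => Cp * g1 t + lam * g3 t) (Ioi (0:ℝ)) :=
      (hg1i.const_mul Cp).add (hg3i.const_mul lam)
    have hcomb' : IntegrableOn (fun t => Cp * g1 t + lam * g3 t) (Ioo (0:ℝ) (1/2)) :=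
      hcomb.mono_set hsubIoi
    have stepA : (∫ t in Ioo (0:ℝ) (1/2), (g0 t - (Cp * g1 t + lam * g3 t)))
        ≤ ∫ t in Ioo (0:ℝ) (1/2), F t := by
      apply setIntegral_mono_on (hg0i'.sub hcomb') (hFint.mono_set hsub1)
        measurableSet_Ioo
      exact hptLow
    have stepB : (∫ t in Ioo (0:ℝ) (1/2), F t) ≤ ∫ t in Ioo (0:ℝ) 1, F t :=
      setIntegral_mono_set hFint hFnonneg (HasSubset.Subset.eventuallyLE hsub1)
    have stepC : (∫ t in Ioo (0:ℝ) (1/2), (g0 t - (Cp * g1 t + lam * g3 t)))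
        = (∫ t in Ioo (0:ℝ) (1/2), g0 t) - ∫ t in Ioo (0:ℝ) (1/2), (Cp * g1 t + lam * g3 t) :=
      integral_sub hg0i' hcomb'
    have stepD : (∫ t in Ioo (0:ℝ) (1/2), g0 t)
        = (∫ t in Ioi (0:ℝ), g0 t) - ∫ t in Ici (1/2:ℝ), g0 t := by
      have hdisj : Disjoint (Ioo (0:ℝ) (1/2)) (Ici (1/2)) :=
        Disjoint.mono_left Set.Ioo_subset_Iio_self (Set.Iio_disjoint_Ici le_rfl)
      have hu := setIntegral_union hdisj measurableSet_Ici
        hg0i' (hg0i.mono_set (fun x hx => lt_of_lt_of_le (by norm_num : (0:ℝ) < 1/2) hx))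
      rw [Set.Ioo_union_Ici_eq_Ioi (by norm_num : (0:ℝ) < 1/2)] at hu
      linarith
    have stepE : (∫ t in Ioo (0:ℝ) (1/2), (Cp * g1 t + lam * g3 t))
        ≤ Cp * (∫ t in Ioi (0:ℝ), g1 t) + lam * ∫ t in Ioi (0:ℝ), g3 t := by
      have h2 : (∫ t in Ioo (0:ℝ) (1/2), (Cp * g1 t + lam * g3 t))
          ≤ ∫ t in Ioi (0:ℝ), (Cp * g1 t + lam * g3 t) := by
        apply setIntegral_mono_set hcomb
        · filter_upwards [ae_restrict_mem measurableSet_Ioi] with t ht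
          have h1 : 0 ≤ t ^ ((1/2) : ℝ) := Real.rpow_nonneg (le_of_lt ht) _
          have h3 : 0 ≤ t ^ ((3/2) : ℝ) := Real.rpow_nonneg (le_of_lt ht) _
          simp only [hg1def, hg3def, Pi.zero_apply]
          exact add_nonneg (mul_nonneg hCp0 (mul_nonneg h1 (Real.exp_nonneg _)))
            (mul_nonneg hlam0.le (mul_nonneg h3 (Real.exp_nonneg _)))
        · exact HasSubset.Subset.eventuallyLE hsubIoi
      rw [integral_add (hg1i.const_mul Cp) (hg3i.const_mul lam),
        integral_const_mul, integral_const_mul] at h2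
      exact h2
    linarith
  -- final assembly
  set s : ℝ := Real.sqrt (2 * lam / π) with hsdef
  have hpi := Real.pi_pos
  have hid : s * ((1/b) ^ ((1/2):ℝ) * Real.sqrt π) = 1 := by
    rw [← Real.sqrt_eq_rpow, ← Real.sqrt_mul (by positivity : (0:ℝ) ≤ 1/b),
      hsdef, ← Real.sqrt_mul (by positivity : (0:ℝ) ≤ 2*lam/π),
      show 2*lam/π * (1/b * π) = 1 from by rw [hbdef]; field_simp]
    exact Real.sqrt_one
  have hp3 : ((1:ℝ)/b) ^ ((3/2):ℝ) = (1/b) ^ ((1/2):ℝ) * (1/b) := by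
    rw [show ((3:ℝ)/2) = 1/2 + 1 by norm_num, Real.rpow_add (by positivity), Real.rpow_one]
  have hp5 : ((1:ℝ)/b) ^ ((5/2):ℝ) = (1/b) ^ ((1/2):ℝ) * (1/b) * (1/b) := by
    rw [show ((5:ℝ)/2) = 1/2 + 1 + 1 by norm_num, Real.rpow_add (by positivity),
      Real.rpow_add (by positivity), Real.rpow_one]
  have hs1 : s * ((1/b) ^ ((3/2):ℝ) * (Real.sqrt π / 2)) = 1/(4*lam) := by
    have : s * ((1/b) ^ ((3/2):ℝ) * (Real.sqrt π / 2))
        = (s * ((1/b) ^ ((1/2):ℝ) * Real.sqrt π)) * ((1/b)/2) := by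
      rw [hp3]; ring
    rw [this, hid, hbdef, one_mul]
    field_simp
    ring
  have hs3 : s * (lam * ((1/b) ^ ((5/2):ℝ) * (3 * Real.sqrt π / 4))) = 3/(16*lam) := by
    have : s * (lam * ((1/b) ^ ((5/2):ℝ) * (3 * Real.sqrt π / 4)))
        = (s * ((1/b) ^ ((1/2):ℝ) * Real.sqrt π)) * (lam * (1/b) * (1/b) * (3/4)) := by
      rw [hp5]; ring
    rw [this, hid, hbdef, one_mul]
    field_simp
    ring
  have hJ : (3:ℝ) ^ e * Lint δ lam = ∫ t in Ioo (0:ℝ) 1, F t := by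
    have h := lint_rw δ lam
    rw [← he] at h
    rw [hFdef]
    exact h
  have h1b : (0:ℝ) ≤ 1/b := (div_pos one_pos hb).le
  have hg1nn : 0 ≤ ∫ t in Ioi (0:ℝ), g1 t := by
    rw [hI1]
    exact mul_nonneg (Real.rpow_nonneg h1b _) (by positivity)
  have hg3nn : 0 ≤ ∫ t in Ioi (0:ℝ), g3 t := by
    rw [hI3]
    exact mul_nonneg (Real.rpow_nonneg h1b _) (by positivity)
  have habs : |(∫ t in Ioo (0:ℝ) 1, F t) - (1/b) ^ ((1/2):ℝ) * Real.sqrt π|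
      ≤ (Cp + 2) * ((1/b) ^ ((3/2):ℝ) * (Real.sqrt π / 2))
        + lam * ((1/b) ^ ((5/2):ℝ) * (3 * Real.sqrt π / 4)) := by
    rw [abs_le]
    constructor
    · rw [← hI0, ← hI1, ← hI3]
      linarith
    · rw [← hI0, ← hI1, ← hI3]
      linarith [mul_nonneg hlam0.le hg3nn, hg1nn]
  have hfinal : (3:ℝ) ^ e * s * Lint δ lam - 1
      = s * ((∫ t in Ioo (0:ℝ) 1, F t) - (1/b) ^ ((1/2):ℝ) * Real.sqrt π) := by
    rw [mul_sub, hid, mul_comm ((3:ℝ)^e) s, mul_assoc, hJ]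
  rw [hfinal, abs_mul, abs_of_nonneg (Real.sqrt_nonneg _)]
  have hbound : s * |(∫ t in Ioo (0:ℝ) 1, F t) - (1/b) ^ ((1/2):ℝ) * Real.sqrt π|
      ≤ (Cp + 2) * (1/(4*lam)) + 3/(16*lam) := by
    have h1 := mul_le_mul_of_nonneg_left habs (Real.sqrt_nonneg (2*lam/π))
    calc s * |(∫ t in Ioo (0:ℝ) 1, F t) - (1/b) ^ ((1/2):ℝ) * Real.sqrt π|
        ≤ s * ((Cp + 2) * ((1/b) ^ ((3/2):ℝ) * (Real.sqrt π / 2))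
          + lam * ((1/b) ^ ((5/2):ℝ) * (3 * Real.sqrt π / 4))) := h1
      _ = (Cp + 2) * (s * ((1/b) ^ ((3/2):ℝ) * (Real.sqrt π / 2)))
          + s * (lam * ((1/b) ^ ((5/2):ℝ) * (3 * Real.sqrt π / 4))) := by ring
      _ = (Cp + 2) * (1/(4*lam)) + 3/(16*lam) := by rw [hs1, hs3]
  refine hbound.trans ?_
  have hl : lam ≠ 0 := ne_of_gt hlam0
  have hrw2 : (Cp + 2) * (1/(4*lam)) + 3/(16*lam) = ((Cp+2)/4 + 3/16) / lam := by
    field_simp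
  rw [hrw2, div_le_div_iff₀ hlam0 hlam0]
  nlinarith [hCp0, hlam0]
end

section
/- Fix a > 0, ζ ∈ (0, 1/a), and dimension d ≥ 1. Let f_σ(x) := exp(−σ|x|²/2) on ℝ^d. Then the H^{aℓ} norm of f_{ζ/ℓ} satisfies ‖f_{ζ/ℓ}‖_{aℓ} = [πℓ/(ζ(1 − aζ))]^{d/4} · (1 + O(1/ℓ)) as ℓ → +∞. -/
open MeasureTheory

/-- Fourier transform on `ℝ^d`, normalized with `(2π)^{-d/2}`. -/
noncomputable def FT (d : ℕ) (f : EuclideanSpace ℝ (Fin d) → ℂ)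
    (k : EuclideanSpace ℝ (Fin d)) : ℂ :=
  (((2 * Real.pi) ^ (-(d : ℝ) / 2) : ℝ) : ℂ) *
    ∫ x, Complex.exp (-(Complex.I * ((inner ℝ k x : ℝ) : ℂ))) * f x

/-- Inverse Fourier transform on `ℝ^d`. -/
noncomputable def invFT (d : ℕ) (F : EuclideanSpace ℝ (Fin d) → ℂ)
    (x : EuclideanSpace ℝ (Fin d)) : ℂ :=
  (((2 * Real.pi) ^ (-(d : ℝ) / 2) : ℝ) : ℂ) *
    ∫ k, Complex.exp (Complex.I * ((inner ℝ k x : ℝ) : ℂ)) * F k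

/-- Membership in the Bessel-potential Sobolev space `H^s(ℝ^d, ℂ)`. -/
def MemSob (d : ℕ) (s : ℝ) (f : EuclideanSpace ℝ (Fin d) → ℂ) : Prop :=
  Integrable (fun k : EuclideanSpace ℝ (Fin d) => (1 + ‖k‖ ^ 2) ^ s * ‖FT d f k‖ ^ 2)

/-- The squared Sobolev norm `‖f‖_s² = ∫ (1+|k|²)^s |𝓕f(k)|² dk`. -/
noncomputable def sobNormSq (d : ℕ) (s : ℝ) (f : EuclideanSpace ℝ (Fin d) → ℂ) : ℝ :=
  ∫ k : EuclideanSpace ℝ (Fin d), (1 + ‖k‖ ^ 2) ^ s * ‖FT d f k‖ ^ 2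

/-- The Sobolev norm `‖f‖_s`. -/
noncomputable def sobNorm (d : ℕ) (s : ℝ) (f : EuclideanSpace ℝ (Fin d) → ℂ) : ℝ :=
  Real.sqrt (sobNormSq d s f)

/-- The sharp constant `K_{ℓ,m,n,d}` for the multiplication `H^m × H^n → H^ℓ`. -/
noncomputable def sharpK (d : ℕ) (l m n : ℝ) : ℝ :=
  sInf {K : ℝ | 0 ≤ K ∧ ∀ f g : EuclideanSpace ℝ (Fin d) → ℂ,
    MemSob d m f → MemSob d n g →
    sobNorm d l (fun x => f x * g x) ≤ K * sobNorm d m f * sobNorm d n g}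

/-- The Gaussian `f_σ(x) = exp(−σ|x|²/2)` on `ℝ^d`. -/
noncomputable def gauss (d : ℕ) (σ : ℝ) : EuclideanSpace ℝ (Fin d) → ℂ :=
  fun x => Complex.exp (-((σ * ‖x‖ ^ 2 / 2 : ℝ) : ℂ))



section Aux
open Real Complex GaussianFourier
open scoped RealInnerProductSpace

theorem ft_gauss (d : ℕ) {σ : ℝ} (hσ : 0 < σ) (k : EuclideanSpace ℝ (Fin d)) :
    FT d (gauss d σ) k
      = ((σ ^ (-(d:ℝ)/2) * Real.exp (-‖k‖^2/(2*σ)) : ℝ) : ℂ) := by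
  have hb : (0:ℝ) < ((σ/2 : ℂ)).re := by norm_num [hσ]
  have key := integral_cexp_neg_mul_sq_norm_add (V := EuclideanSpace ℝ (Fin d))
    hb (-Complex.I) k
  rw [FT]
  have heq : (fun x : EuclideanSpace ℝ (Fin d) =>
      Complex.exp (-(Complex.I * ((inner ℝ k x : ℝ) : ℂ))) * gauss d σ x)
      = fun x => Complex.exp (-(σ/2 : ℂ) * ‖x‖^2 + (-Complex.I) * ((inner ℝ k x : ℝ) : ℂ)) := by
    funext x
    rw [gauss, ← Complex.exp_add]
    congr 1
    push_cast
    ring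
  rw [heq, key, finrank_euclideanSpace_fin]
  have h2π : (0:ℝ) < 2*π := by positivity
  have hpow : ((↑π/(σ/2) : ℂ)) ^ ((d:ℂ)/2) = (((2*π/σ)^((d:ℝ)/2) : ℝ) : ℂ) := by
    rw [show (↑π/(σ/2) : ℂ) = ((2*π/σ : ℝ) : ℂ) by push_cast; ring,
        show ((d:ℂ)/2) = (((d:ℝ)/2 : ℝ) : ℂ) by push_cast; ring,
        ← Complex.ofReal_cpow (by positivity)]
  have hexp : Complex.exp ((-Complex.I)^2 * (‖k‖:ℂ)^2 / (4*(σ/2)))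
      = ((Real.exp (-‖k‖^2/(2*σ)) : ℝ) : ℂ) := by
    rw [Complex.ofReal_exp]
    congr 1
    rw [show ((-Complex.I)^2 = (-1:ℂ)) by simp]
    push_cast
    ring
  rw [hpow, hexp, ← Complex.ofReal_mul, ← Complex.ofReal_mul]
  congr 1
  have hne1 : (2*π)^((d:ℝ)/2) ≠ 0 := (Real.rpow_pos_of_pos h2π _).ne'
  have hne2 : σ^((d:ℝ)/2) ≠ 0 := (Real.rpow_pos_of_pos hσ _).ne'
  rw [show (-(d:ℝ)/2) = -((d:ℝ)/2) by ring, Real.rpow_neg h2π.le, Real.rpow_neg hσ.le, Real.div_rpow h2π.le hσ.le]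
  field_simp

theorem sobNormSq_gauss (d : ℕ) {σ : ℝ} (hσ : 0 < σ) (s : ℝ) :
    sobNormSq d s (gauss d σ)
      = σ ^ (-(d:ℝ)) * ∫ k : EuclideanSpace ℝ (Fin d),
          (1 + ‖k‖^2) ^ s * Real.exp (-(1/σ) * ‖k‖^2) := by
  rw [sobNormSq, ← integral_const_mul]
  congr 1; funext k
  rw [ft_gauss d hσ k, Complex.norm_real, Real.norm_eq_abs,
    abs_of_pos (by positivity : (0:ℝ) < σ ^ (-(d:ℝ)/2) * Real.exp (-‖k‖^2/(2*σ)))]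
  have h1 : (σ ^ (-(d:ℝ)/2))^(2:ℕ) = σ^(-(d:ℝ)) := by
    rw [← Real.rpow_natCast (σ ^ (-(d:ℝ)/2)) 2, ← Real.rpow_mul hσ.le]
    norm_num
  have h2 : (Real.exp (-‖k‖^2/(2*σ)))^(2:ℕ) = Real.exp (-(1/σ) * ‖k‖^2) := by
    rw [sq, ← Real.exp_add]
    congr 1
    field_simp
    ring
  rw [mul_pow, h1, h2]
  ring

-- pointwise lemmas
lemma pw_up {s c u : ℝ} (hs : 0 < s) (hu : 0 ≤ u) :
    (1+u)^s * Real.exp (-(s+c)*u) ≤ Real.exp (-c*u) := by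
  have h1 : (1+u)^s ≤ Real.exp (s*u) := by
    calc (1+u)^s ≤ (Real.exp u)^s :=
          Real.rpow_le_rpow (by positivity) (by linarith [Real.add_one_le_exp u]) hs.le
    _ = Real.exp (s*u) := by
        rw [Real.rpow_def_of_pos (Real.exp_pos u), Real.log_exp]; ring_nf
  calc (1+u)^s * Real.exp (-(s+c)*u) ≤ Real.exp (s*u) * Real.exp (-(s+c)*u) := by
        apply mul_le_mul_of_nonneg_right h1 (Real.exp_nonneg _)
  _ = Real.exp (-c*u) := by rw [← Real.exp_add]; ring_nf

lemma pw_low {s c u : ℝ} (hs : 0 < s) (hu : 0 ≤ u) :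
    Real.exp (-c*u) - s*u^2*Real.exp (-c*u) ≤ (1+u)^s * Real.exp (-(s+c)*u) := by
  have hlog : u - u^2 ≤ Real.log (1+u) := by
    have h0 : (0:ℝ) < 1+u := by linarith
    have h1 : Real.log ((1+u)⁻¹) ≤ (1+u)⁻¹ - 1 :=
      Real.log_le_sub_one_of_pos (by positivity)
    rw [Real.log_inv] at h1
    have h2 : u/(1+u) ≤ Real.log (1+u) := by
      have : (1+u)⁻¹ - 1 = -(u/(1+u)) := by field_simp; ring
      linarith [h1, this.symm ▸ h1]
    have h3 : u - u^2 ≤ u/(1+u) := by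
      rw [le_div_iff₀ h0]; nlinarith
    linarith
  have h4 : Real.exp (s*(u-u^2)) ≤ (1+u)^s := by
    rw [Real.rpow_def_of_pos (by linarith : (0:ℝ) < 1+u)]
    exact Real.exp_le_exp.mpr (by nlinarith [hlog])
  have h5 : Real.exp (s*(u-u^2)) * Real.exp (-(s+c)*u)
      = Real.exp (-c*u) * Real.exp (-(s*u^2)) := by
    rw [← Real.exp_add, ← Real.exp_add]; ring_nf
  have h6 : 1 - s*u^2 ≤ Real.exp (-(s*u^2)) := by
    linarith [Real.add_one_le_exp (-(s*u^2))]
  calc Real.exp (-c*u) - s*u^2*Real.exp (-c*u)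
      = Real.exp (-c*u) * (1 - s*u^2) := by ring
  _ ≤ Real.exp (-c*u) * Real.exp (-(s*u^2)) :=
      mul_le_mul_of_nonneg_left h6 (Real.exp_nonneg _)
  _ = Real.exp (s*(u-u^2)) * Real.exp (-(s+c)*u) := h5.symm
  _ ≤ (1+u)^s * Real.exp (-(s+c)*u) :=
      mul_le_mul_of_nonneg_right h4 (Real.exp_nonneg _)

lemma pw_quart {c u : ℝ} (hc : 0 < c) (hu : 0 ≤ u) :
    u^2 * Real.exp (-c*u) ≤ (16/c^2) * Real.exp (-(c/2)*u) := by
  have h1 : (c/4)*u ≤ Real.exp ((c/4)*u) := by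
    linarith [Real.add_one_le_exp ((c/4)*u)]
  have h2 : Real.exp ((c/2)*u) = (Real.exp ((c/4)*u))^2 := by
    rw [sq, ← Real.exp_add]; ring_nf
  have key : c^2*u^2 ≤ 16 * Real.exp ((c/2)*u) := by
    have h0 : (0:ℝ) ≤ (c/4)*u := by positivity
    nlinarith [mul_le_mul h1 h1 h0 (Real.exp_nonneg ((c/4)*u)), h2]
  have k2 : c^2 * (u^2 * Real.exp (-(c/2)*u)) ≤ 16 := by
    have h := mul_le_mul_of_nonneg_right key (Real.exp_nonneg (-(c/2)*u))
    have e0 : Real.exp ((c/2)*u) * Real.exp (-(c/2)*u) = 1 := by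
      rw [← Real.exp_add]; norm_num
    nlinarith [h, e0]
  have e3 : Real.exp (-c*u) = Real.exp (-(c/2)*u) * Real.exp (-(c/2)*u) := by
    rw [← Real.exp_add]; ring_nf
  rw [e3, div_mul_eq_mul_div, ← mul_assoc, le_div_iff₀ (by positivity : (0:ℝ)<c^2)]
  nlinarith [Real.exp_nonneg (-(c/2)*u), k2]

lemma int_gauss (d : ℕ) {b : ℝ} (hb : 0 < b) :
    ∫ v : EuclideanSpace ℝ (Fin d), Real.exp (-b*‖v‖^2) = (Real.pi/b)^((d:ℝ)/2) := by
  have h := GaussianFourier.integral_rexp_neg_mul_sq_norm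
    (V := EuclideanSpace ℝ (Fin d)) hb
  simpa [finrank_euclideanSpace_fin] using h

lemma integrable_gaussE (d : ℕ) {b : ℝ} (hb : 0 < b) :
    Integrable (fun v : EuclideanSpace ℝ (Fin d) => Real.exp (-b*‖v‖^2)) := by
  have h := (GaussianFourier.integrable_cexp_neg_mul_sq_norm_add
    (V := EuclideanSpace ℝ (Fin d)) (b := (b:ℂ)) (by simpa using hb) 0 0).norm
  simpa [Complex.norm_exp, ← Complex.ofReal_pow, ← Complex.ofReal_mul, ← Complex.ofReal_neg] using h

lemma cont_main (d : ℕ) (s b : ℝ) :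
    Continuous (fun k : EuclideanSpace ℝ (Fin d) =>
      (1+‖k‖^2)^s * Real.exp (-b*‖k‖^2)) := by
  have h1 : Continuous fun k : EuclideanSpace ℝ (Fin d) => 1+‖k‖^2 := by continuity
  exact (h1.rpow_const (fun k => Or.inl (by positivity))).mul (by continuity)

lemma integrable_main (d : ℕ) {s c : ℝ} (hs : 0 < s) (hc : 0 < c) :
    Integrable (fun k : EuclideanSpace ℝ (Fin d) =>
      (1+‖k‖^2)^s * Real.exp (-(s+c)*‖k‖^2)) := by
  refine (integrable_gaussE d hc).mono' (cont_main d s (s+c)).aestronglyMeasurable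
    (ae_of_all _ fun k => ?_)
  rw [Real.norm_eq_abs, _root_.abs_of_nonneg]
  · exact pw_up hs (sq_nonneg _)
  · positivity

lemma integrable_quart (d : ℕ) {c : ℝ} (hc : 0 < c) :
    Integrable (fun k : EuclideanSpace ℝ (Fin d) =>
      (‖k‖^2)^2 * Real.exp (-c*‖k‖^2)) := by
  have hcont : Continuous (fun k : EuclideanSpace ℝ (Fin d) =>
      (‖k‖^2)^2 * Real.exp (-c*‖k‖^2)) := by continuity
  refine ((integrable_gaussE d (half_pos hc)).const_mul (16/c^2)).mono'
    hcont.aestronglyMeasurable (ae_of_all _ fun k => ?_)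
  rw [Real.norm_eq_abs, _root_.abs_of_nonneg]
  · exact pw_quart hc (sq_nonneg _)
  · positivity

theorem J_le (d : ℕ) {s c : ℝ} (hs : 0 < s) (hc : 0 < c) :
    ∫ k : EuclideanSpace ℝ (Fin d), (1+‖k‖^2)^s * Real.exp (-(s+c)*‖k‖^2)
      ≤ (Real.pi/c)^((d:ℝ)/2) := by
  rw [← int_gauss d hc]
  exact integral_mono_of_nonneg (ae_of_all _ fun k => by positivity)
    (integrable_gaussE d hc) (ae_of_all _ fun k => pw_up hs (sq_nonneg _))

theorem J_ge (d : ℕ) {s c : ℝ} (hs : 0 < s) (hc : 0 < c) :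
    (Real.pi/c)^((d:ℝ)/2) * (1 - s*(16/c^2)*(2:ℝ)^((d:ℝ)/2))
      ≤ ∫ k : EuclideanSpace ℝ (Fin d), (1+‖k‖^2)^s * Real.exp (-(s+c)*‖k‖^2) := by
  have hq := integrable_quart d (c := c) hc
  have hg := integrable_gaussE d hc
  have hmain := integrable_main d hs hc
  set G : ℝ := (Real.pi/c)^((d:ℝ)/2) with hG
  have hGpos : 0 < G := Real.rpow_pos_of_pos (by positivity) _
  have step1 : ∫ k : EuclideanSpace ℝ (Fin d),
        (Real.exp (-c*‖k‖^2) - s * ((‖k‖^2)^2 * Real.exp (-c*‖k‖^2)))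
      ≤ ∫ k : EuclideanSpace ℝ (Fin d), (1+‖k‖^2)^s * Real.exp (-(s+c)*‖k‖^2) := by
    refine integral_mono (hg.sub (hq.const_mul s)) hmain (fun k => ?_)
    have h := pw_low (s := s) (c := c) hs (sq_nonneg ‖k‖)
    simp only []
    nlinarith [h]
  have int_eq : ∫ k : EuclideanSpace ℝ (Fin d),
        (Real.exp (-c*‖k‖^2) - s * ((‖k‖^2)^2 * Real.exp (-c*‖k‖^2)))
      = G - s * ∫ k : EuclideanSpace ℝ (Fin d), (‖k‖^2)^2 * Real.exp (-c*‖k‖^2) := by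
    rw [integral_sub hg (hq.const_mul s), integral_const_mul, int_gauss d hc]
  have quart_le : ∫ k : EuclideanSpace ℝ (Fin d), (‖k‖^2)^2 * Real.exp (-c*‖k‖^2)
      ≤ (16/c^2) * ((2:ℝ)^((d:ℝ)/2) * G) := by
    have h1 := integral_mono hq
      ((integrable_gaussE d (half_pos hc)).const_mul (16/c^2))
      (fun k => pw_quart hc (sq_nonneg ‖k‖))
    rw [integral_const_mul, int_gauss d (half_pos hc)] at h1
    have h2 : (Real.pi/(c/2))^((d:ℝ)/2) = (2:ℝ)^((d:ℝ)/2) * G := by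
      rw [hG, ← Real.mul_rpow (by norm_num) (by positivity)]
      congr 1
      field_simp
    rw [h2] at h1
    exact h1
  have hquartnn : 0 ≤ ∫ k : EuclideanSpace ℝ (Fin d), (‖k‖^2)^2 * Real.exp (-c*‖k‖^2) :=
    integral_nonneg (fun k => by positivity)
  calc G * (1 - s*(16/c^2)*(2:ℝ)^((d:ℝ)/2))
      = G - s*((16/c^2) * ((2:ℝ)^((d:ℝ)/2) * G)) := by ring
    _ ≤ G - s * ∫ k : EuclideanSpace ℝ (Fin d), (‖k‖^2)^2 * Real.exp (-c*‖k‖^2) := by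
        nlinarith [mul_le_mul_of_nonneg_left quart_le hs.le]
    _ = _ := int_eq.symm
    _ ≤ _ := step1

end Aux

set_option maxHeartbeats 1000000 in
/-- fix `a > 0`, `ζ ∈ (0,1/a)`, `d ≥ 1`. Then
`‖f_{ζ/ℓ}‖_{aℓ} = [πℓ/(ζ(1−aζ))]^{d/4} (1 + O(1/ℓ))` as `ℓ → +∞`. -/
theorem stmt14 (d : ℕ) (hd : 1 ≤ d) (a ζ : ℝ) (ha : 0 < a) (hζ : 0 < ζ)
    (hζa : ζ < 1 / a) :
    ∃ C Λ : ℝ, 0 < C ∧ 0 < Λ ∧ ∀ l : ℝ, Λ ≤ l →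
      |sobNorm d (a * l) (gauss d (ζ / l)) /
          (Real.pi * l / (ζ * (1 - a * ζ))) ^ ((d : ℝ) / 4) - 1| ≤ C / l := by
  classical
  have haζ : a * ζ < 1 := by
    have := (lt_div_iff₀ ha).mp hζa
    linarith
  have h1aζ : 0 < 1 - a * ζ := by linarith
  set c₀ : ℝ := (1 - a*ζ)/ζ with hc₀def
  have hc₀ : 0 < c₀ := div_pos h1aζ hζ
  set C₀ : ℝ := 16*a*(2:ℝ)^((d:ℝ)/2)/c₀^2 with hC₀def
  have hC₀pos : 0 < C₀ := by positivity
  refine ⟨C₀, max 1 C₀, hC₀pos, lt_of_lt_of_le one_pos (le_max_left _ _), fun l hl => ?_⟩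
  have hl1 : 1 ≤ l := le_trans (le_max_left _ _) hl
  have hlC : C₀ ≤ l := le_trans (le_max_right _ _) hl
  have hlpos : 0 < l := lt_of_lt_of_le one_pos hl1
  have hσ : 0 < ζ/l := div_pos hζ hlpos
  have hs : 0 < a*l := mul_pos ha hlpos
  have hc : 0 < c₀*l := mul_pos hc₀ hlpos
  have key := sobNormSq_gauss d hσ (a*l)
  have hsum' : 1/(ζ/l) = a*l + c₀*l := by
    rw [hc₀def]; field_simp; ring
  simp_rw [hsum'] at key
  have hub := J_le d hs hc
  have hlb := J_ge d hs hc
  have herr : (a*l)*(16/(c₀*l)^2)*(2:ℝ)^((d:ℝ)/2) = C₀/l := by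
    rw [hC₀def]; field_simp
  rw [herr] at hlb
  set X : ℝ := Real.pi * l / (ζ * (1 - a * ζ)) with hX
  have hXpos : 0 < X := by positivity
  have hprefpos : 0 < (ζ/l)^(-(d:ℝ)) := Real.rpow_pos_of_pos hσ _
  have hpowP : (ζ/l)^(-(d:ℝ)) * (Real.pi/(c₀*l))^((d:ℝ)/2) = X^((d:ℝ)/2) := by
    have e1 : (ζ/l)^(-(d:ℝ)) = ((ζ/l)^((-2:ℝ)))^((d:ℝ)/2) := by
      rw [← Real.rpow_mul hσ.le]
      congr 1
      ring
    rw [e1, ← Real.mul_rpow (by positivity) (by positivity)]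
    congr 1
    rw [show ((-2):ℝ) = -((2:ℕ):ℝ) by norm_num, Real.rpow_neg hσ.le,
      Real.rpow_natCast, hX, hc₀def]
    field_simp
  set A : ℝ := X^((d:ℝ)/4) with hA
  have hApos : 0 < A := Real.rpow_pos_of_pos hXpos _
  have hAsq : A^2 = X^((d:ℝ)/2) := by
    rw [hA, ← Real.rpow_natCast (X^((d:ℝ)/4)) 2, ← Real.rpow_mul hXpos.le]
    congr 1
    push_cast
    ring
  have hSub : sobNormSq d (a*l) (gauss d (ζ/l)) ≤ A^2 := by
    rw [key, hAsq, ← hpowP]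
    exact mul_le_mul_of_nonneg_left hub hprefpos.le
  have hSlb : A^2*(1 - C₀/l) ≤ sobNormSq d (a*l) (gauss d (ζ/l)) := by
    rw [key, hAsq, ← hpowP]
    have h := mul_le_mul_of_nonneg_left hlb hprefpos.le
    calc (ζ/l)^(-(d:ℝ)) * (Real.pi/(c₀*l))^((d:ℝ)/2) * (1 - C₀/l)
        = (ζ/l)^(-(d:ℝ)) * ((Real.pi/(c₀*l))^((d:ℝ)/2) * (1 - C₀/l)) := by ring
      _ ≤ _ := h
  have hεnn : 0 ≤ C₀/l := div_nonneg hC₀pos.le hlpos.le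
  have hε1 : C₀/l ≤ 1 := (div_le_one hlpos).mpr hlC
  have hNub : sobNorm d (a*l) (gauss d (ζ/l)) ≤ A := by
    rw [sobNorm]
    have h := Real.sqrt_le_sqrt hSub
    rwa [Real.sqrt_sq hApos.le] at h
  have hNlb : A*(1 - C₀/l) ≤ sobNorm d (a*l) (gauss d (ζ/l)) := by
    have h1 : Real.sqrt (A^2*(1 - C₀/l)) ≤ sobNorm d (a*l) (gauss d (ζ/l)) :=
      Real.sqrt_le_sqrt hSlb
    have h2 : Real.sqrt (A^2*(1 - C₀/l)) = A * Real.sqrt (1 - C₀/l) := by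
      rw [Real.sqrt_mul (sq_nonneg A), Real.sqrt_sq hApos.le]
    have h3 : 1 - C₀/l ≤ Real.sqrt (1 - C₀/l) := by
      have h4 : Real.sqrt ((1 - C₀/l)^2) ≤ Real.sqrt (1 - C₀/l) :=
        Real.sqrt_le_sqrt (by nlinarith)
      rwa [Real.sqrt_sq (by linarith)] at h4
    calc A*(1 - C₀/l) ≤ A * Real.sqrt (1 - C₀/l) :=
          mul_le_mul_of_nonneg_left h3 hApos.le
      _ = Real.sqrt (A^2*(1 - C₀/l)) := h2.symm
      _ ≤ _ := h1
  have hdiv : sobNorm d (a*l) (gauss d (ζ/l)) / A ≤ 1 := (div_le_one hApos).mpr hNub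
  have hdiv2 : 1 - C₀/l ≤ sobNorm d (a*l) (gauss d (ζ/l)) / A :=
    (le_div_iff₀ hApos).mpr (by nlinarith [hNlb])
  rw [abs_le]
  constructor
  · linarith
  · linarith
end

section
/- Let 1 ≤ b ≤ c and define D_{b,c}(ξ,η) := (1 − ξ − η)(ξ + η) / (ξ η (1 − bξ)(1 − cη)) on the domain Δ_{b,c} := {(ξ,η) ∈ (0,1/b) × (0,1/c) : ξ + η < 1}. Then for b = c = 2, D_{2,2} attains its minimum on Δ_{2,2} at (ξ,η) = (1/4, 1/4), with minimum value D_{2,2}(1/4,1/4) = 16. -/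
/-- on `Δ_{2,2} = {(ξ,η) ∈ (0,1/2)×(0,1/2) : ξ+η < 1}`, the function
`D_{2,2}(ξ,η) = (1−ξ−η)(ξ+η)/(ξη(1−2ξ)(1−2η))` attains its minimum at `(1/4,1/4)`,
with minimum value `16`. -/
theorem stmt15 :
    ((1 - (1/4 : ℝ) - 1/4) * (1/4 + 1/4)) /
        ((1/4 : ℝ) * (1/4) * (1 - 2 * (1/4)) * (1 - 2 * (1/4))) = 16 ∧
    ∀ ξ η : ℝ, ξ ∈ Set.Ioo (0:ℝ) (1/2) → η ∈ Set.Ioo (0:ℝ) (1/2) → ξ + η < 1 →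
      16 ≤ ((1 - ξ - η) * (ξ + η)) / (ξ * η * (1 - 2 * ξ) * (1 - 2 * η)) := by
  constructor
  · norm_num
  · rintro ξ η ⟨hξ0, hξhalf⟩ ⟨hη0, hηhalf⟩ hsum
    have h1 : (0:ℝ) < 1 - 2 * ξ := by linarith
    have h2 : (0:ℝ) < 1 - 2 * η := by linarith
    have hB : (0:ℝ) < ξ * η * (1 - 2 * ξ) * (1 - 2 * η) := by positivity
    rw [le_div_iff₀ hB]
    have hs0 : (0:ℝ) < ξ + η := by linarith
    have hs1 : (0:ℝ) < 1 - ξ - η := by linarith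
    have h4 : 4 * (ξ * η) ≤ (ξ + η) ^ 2 := by nlinarith [sq_nonneg (ξ - η)]
    have h5 : (1 - 2 * ξ) * (1 - 2 * η) ≤ (1 - ξ - η) ^ 2 := by
      nlinarith [sq_nonneg (ξ - η)]
    have h6 : 16 * (ξ * η * (1 - 2 * ξ) * (1 - 2 * η))
        ≤ 4 * ((ξ + η) ^ 2 * (1 - ξ - η) ^ 2) := by
      have := mul_le_mul h4 h5 (le_of_lt (mul_pos h1 h2)) (by positivity)
      nlinarith [this]
    have h7 : 4 * ((ξ + η) ^ 2 * (1 - ξ - η) ^ 2) ≤ (1 - ξ - η) * (ξ + η) := by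
      nlinarith [sq_nonneg (2 * (ξ + η) - 1), mul_pos hs0 hs1]
    linarith
end
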